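/- Operator transmutation formula (bounded case). Let H be a complex Hilbert space and A a bounded selfadjoint nonnegative linear operator on H. Then for every t > 0 and every f ∈ H, e^{−tA} f = (t^{−3/2}/(4√π)) ∫₀^∞ e^{−τ/(4t)} S(√τ, A) f dτ, where the integral is a Bochner integral over τ ∈ (0,∞). -/

import Mathlib

set_option maxHeartbeats 1000000

open Set MeasureTheory Real Filter Topology

noncomputable def msinc (u : ℝ) : ℝ := if u = 0 then 1 else Real.sin u / u

lemma msinc_zero : msinc 0 = 1 := by simp [msinc]

lemma abs_msinc_le (u : ℝ) : |msinc u| ≤ 1 := by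
  rcases eq_or_ne u 0 with rfl | hu
  · simp [msinc]
  · rw [msinc, if_neg hu, abs_div]
    rw [div_le_one (abs_pos.mpr hu)]
    exact Real.abs_sin_le_abs

lemma continuous_msinc : Continuous msinc := by
  rw [continuous_iff_continuousAt]
  intro u
  rcases eq_or_ne u 0 with rfl | hu
  · have h1 : Tendsto (fun v : ℝ => Real.sin v / v) (𝓝[≠] 0) (𝓝 1) := by
      have h0 := (Real.hasDerivAt_sin 0)
      rw [hasDerivAt_iff_tendsto_slope] at h0
      rw [Real.cos_zero] at h0
      exact h0.congr fun v => by rw [slope_def_field]; simp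
    have h2 : Tendsto msinc (𝓝[≠] 0) (𝓝 1) := by
      refine h1.congr' ?_
      filter_upwards [self_mem_nhdsWithin] with v hv
      exact (if_neg (hv : v ≠ 0)).symm
    have : ContinuousAt msinc 0 := by
      rw [ContinuousAt, msinc_zero, ← nhdsNE_sup_pure 0]
      refine h2.sup ?_
      have := tendsto_pure_nhds msinc 0
      rwa [msinc_zero] at this
    exact this
  · have : ContinuousAt (fun v : ℝ => Real.sin v / v) u :=
      (Real.continuous_sin.continuousAt).div continuousAt_id hu
    refine this.congr ?_
    filter_upwards [isOpen_ne.mem_nhds hu] with v hv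
    simp [msinc, hv]

lemma mul_msinc_eq (s x : ℝ) (hx : 0 ≤ x) :
    (if x = 0 then s else Real.sin (s * Real.sqrt x) / Real.sqrt x)
      = s * msinc (s * Real.sqrt x) := by
  rcases eq_or_ne x 0 with rfl | hx0
  · simp [msinc]
  · have hsx : 0 < Real.sqrt x := Real.sqrt_pos.mpr (lt_of_le_of_ne hx (Ne.symm hx0))
    rw [if_neg hx0]
    rcases eq_or_ne s 0 with rfl | hs
    · simp
    · rw [msinc, if_neg (by positivity)]
      field_simp

lemma hasDerivAt_mul_msinc (b s : ℝ) :
    HasDerivAt (fun s : ℝ => s * msinc (s * b)) (Real.cos (s * b)) s := by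
  rcases eq_or_ne b 0 with rfl | hb
  · simpa [msinc] using (hasDerivAt_id' s)
  · have heq : (fun s : ℝ => s * msinc (s * b)) = fun s : ℝ => Real.sin (s * b) / b := by
      funext v
      rcases eq_or_ne v 0 with rfl | hv
      · simp
      · rw [msinc, if_neg (by exact mul_ne_zero hv hb)]
        field_simp
    rw [heq]
    have h : HasDerivAt (fun s : ℝ => Real.sin (s * b)) (Real.cos (s * b) * b) s := by
      have := (Real.hasDerivAt_sin (s * b)).comp s ((hasDerivAt_id s).mul_const b)
      simpa [Function.comp_def] using this
    simpa [mul_div_assoc, mul_div_cancel_right₀ _ hb] using h.div_const b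

lemma integral_cos_gaussian (p b : ℝ) (hp : 0 < p) :
    ∫ x : ℝ, Real.exp (-(p*x^2)) * Real.cos (x*b)
      = Real.sqrt (π/p) * Real.exp (-(b^2/(4*p))) := by
  have hre : ((-p : ℂ)).re < 0 := by simpa using hp
  have h1 := integral_cexp_quadratic hre ((b:ℂ)*Complex.I) 0
  have hint := integrable_cexp_quadratic' hre ((b:ℂ)*Complex.I) 0
  have harg : ∀ x : ℝ, (-p)*(x:ℂ)^2 + ((b:ℂ)*Complex.I)*x + 0
      = ((-(p*x^2) : ℝ) : ℂ) + ((x*b : ℝ) : ℂ)*Complex.I := by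
    intro x; push_cast; ring
  have hpt : ∀ x : ℝ, Real.exp (-(p*x^2)) * Real.cos (x*b)
      = (Complex.exp ((-p)*(x:ℂ)^2 + ((b:ℂ)*Complex.I)*x + 0)).re := by
    intro x
    rw [harg x, Complex.exp_re]
    simp [← Complex.ofReal_pow]
  calc ∫ x : ℝ, Real.exp (-(p*x^2)) * Real.cos (x*b)
      = ∫ x : ℝ, (Complex.exp ((-p)*(x:ℂ)^2 + ((b:ℂ)*Complex.I)*x + 0)).re :=
        integral_congr_ae (Filter.Eventually.of_forall hpt)
    _ = (∫ x : ℝ, Complex.exp ((-p)*(x:ℂ)^2 + ((b:ℂ)*Complex.I)*x + 0)).re := by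
        simpa using (integral_re hint)
    _ = Real.sqrt (π/p) * Real.exp (-(b^2/(4*p))) := by
        rw [h1]
        have e1 : (↑Real.pi / -(-p : ℂ)) = ((Real.pi / p : ℝ) : ℂ) := by push_cast; ring
        have e2 : ((0 : ℂ) - ((b:ℂ)*Complex.I)^2/(4*(-p))) = ((-(b^2/(4*p)) : ℝ) : ℂ) := by
          rw [mul_pow, Complex.I_sq]
          push_cast
          field_simp
          ring
        rw [e1, e2, ← Complex.ofReal_exp]
        rw [show ((1/2 : ℂ)) = ((1/2 : ℝ) : ℂ) by norm_num]
        rw [← Complex.ofReal_cpow (by positivity), ← Real.sqrt_eq_rpow]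
        rw [← Complex.ofReal_mul, Complex.ofReal_re]

lemma integral_cos_gaussian_Ioi (p b : ℝ) (hp : 0 < p) :
    ∫ x in Ioi (0:ℝ), Real.exp (-(p*x^2)) * Real.cos (x*b)
      = Real.sqrt (π/p) * Real.exp (-(b^2/(4*p))) / 2 := by
  have h := integral_comp_abs (f := fun x => Real.exp (-(p*x^2)) * Real.cos (x*b))
  have heq : ∀ x : ℝ, Real.exp (-(p*|x|^2)) * Real.cos (|x| * b)
      = Real.exp (-(p*x^2)) * Real.cos (x*b) := by
    intro x
    rcases abs_choice x with hx | hx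
    · rw [hx]
    · rw [hx, neg_mul, Real.cos_neg]
      ring_nf
  have h2 : ∫ x : ℝ, Real.exp (-(p*|x|^2)) * Real.cos (|x| * b)
      = ∫ x : ℝ, Real.exp (-(p*x^2)) * Real.cos (x*b) :=
    integral_congr_ae (.of_forall heq)
  rw [h2, integral_cos_gaussian p b hp] at h
  linarith

lemma integrable_sq_exp (p : ℝ) (hp : 0 < p) :
    IntegrableOn (fun s : ℝ => s^2 * Real.exp (-(p*s^2))) (Ioi 0) := by
  have := integrableOn_rpow_mul_exp_neg_mul_sq hp (s := 2) (by norm_num)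
  refine this.congr_fun (fun x hx => ?_) measurableSet_Ioi
  beta_reduce
  rw [show (2:ℝ) = ((2:ℕ):ℝ) by norm_num, Real.rpow_natCast, neg_mul]

lemma ibp_key (p b : ℝ) (hp : 0 < p) :
    ∫ s in Ioi (0:ℝ), s^2 * Real.exp (-(p*s^2)) * msinc (s*b)
      = (1/(2*p)) * ∫ s in Ioi (0:ℝ), Real.exp (-(p*s^2)) * Real.cos (s*b) := by
  set F : ℝ → ℝ := fun s => -(Real.exp (-(p*s^2)) * (s * msinc (s*b))) / (2*p) with hF
  set d : ℝ → ℝ := fun s =>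
    s^2 * Real.exp (-(p*s^2)) * msinc (s*b) - Real.exp (-(p*s^2)) * Real.cos (s*b) / (2*p)
    with hd
  have hderiv : ∀ s : ℝ, HasDerivAt F (d s) s := by
    intro s
    have hg : HasDerivAt (fun s : ℝ => Real.exp (-(p*s^2)))
        (Real.exp (-(p*s^2)) * (-(p*(2*s)))) s := by
      have hinner : HasDerivAt (fun s : ℝ => -(p*s^2)) (-(p*(2*s))) s := by
        simpa [mul_comm] using ((hasDerivAt_pow 2 s).const_mul p).fun_neg
      exact (Real.hasDerivAt_exp _).comp s hinner
    have hh := hasDerivAt_mul_msinc b s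
    have := ((hg.fun_mul hh).fun_neg).div_const (2*p)
    refine this.congr_deriv ?_
    rw [hd]
    field_simp
    ring
  have hd1 : IntegrableOn (fun s : ℝ => s^2 * Real.exp (-(p*s^2)) * msinc (s*b)) (Ioi 0) := by
    refine (integrable_sq_exp p hp).mono' ?_ ?_
    · exact ((continuous_pow 2).mul ((continuous_const.mul (continuous_pow 2)).neg.rexp) |>.mul
        (continuous_msinc.comp (continuous_id.mul continuous_const))).aestronglyMeasurable
    · filter_upwards [] with s
      simp only [Real.norm_eq_abs, abs_mul]
      calc |s^2| * |Real.exp (-(p*s^2))| * |msinc (s*b)|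
          ≤ |s^2| * |Real.exp (-(p*s^2))| * 1 :=
            mul_le_mul_of_nonneg_left (abs_msinc_le _) (by positivity)
        _ = s^2 * Real.exp (-(p*s^2)) := by
            rw [mul_one, abs_of_nonneg (by positivity : (0:ℝ) ≤ s^2),
              abs_of_nonneg (Real.exp_pos _).le]
  have hd2 : IntegrableOn (fun s : ℝ => Real.exp (-(p*s^2)) * Real.cos (s*b) / (2*p)) (Ioi 0) := by
    have hbase : IntegrableOn (fun s : ℝ => Real.exp (-(p*s^2)) / (2*p)) (Ioi 0) := by
      simpa [neg_mul, div_eq_mul_inv] using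
        ((integrable_exp_neg_mul_sq hp).mul_const ((2*p)⁻¹)).integrableOn
    refine hbase.mono' ?_ ?_
    · exact (((continuous_const.mul (continuous_pow 2)).neg.rexp.mul
        (Real.continuous_cos.comp (continuous_id.mul continuous_const))).div_const
        (2*p)).aestronglyMeasurable
    · filter_upwards [] with s
      simp only [Real.norm_eq_abs, abs_div, abs_mul]
      rw [abs_of_pos hp, abs_two, abs_of_nonneg (Real.exp_pos _).le]
      calc Real.exp (-(p*s^2)) * |Real.cos (s*b)| / (2*p)
          ≤ Real.exp (-(p*s^2)) * 1 / (2*p) := by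
            gcongr
            exact Real.abs_cos_le_one _
        _ = Real.exp (-(p*s^2)) / (2*p) := by ring
  have hdint : IntegrableOn d (Ioi 0) := by
    exact hd1.sub hd2
  have hF0 : F 0 = 0 := by simp [hF]
  have htend : Tendsto F atTop (nhds 0) := by
    have hb : Tendsto (fun s : ℝ => (1/(2*p)) * (s * Real.exp (-(p*s^2)))) atTop (nhds 0) := by
      have h0 := tendsto_rpow_mul_exp_neg_mul_atTop_nhds_zero (1/2) p hp
      have h1 : Tendsto (fun s : ℝ => (s^2)^((1:ℝ)/2) * Real.exp (-p*(s^2))) atTop (nhds 0) :=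
        h0.comp (tendsto_pow_atTop (two_ne_zero))
      have h2 : Tendsto (fun s : ℝ => s * Real.exp (-(p*s^2))) atTop (nhds 0) := by
        refine h1.congr' ?_
        filter_upwards [eventually_ge_atTop (0:ℝ)] with s hs
        rw [← Real.sqrt_eq_rpow, Real.sqrt_sq hs, neg_mul]
      simpa using h2.const_mul (1/(2*p))
    refine squeeze_zero_norm' ?_ hb
    filter_upwards [eventually_ge_atTop (0:ℝ)] with s hs
    simp only [hF, Real.norm_eq_abs, abs_div, abs_neg, abs_mul]
    rw [abs_of_pos hp, abs_two, abs_of_nonneg (Real.exp_pos _).le, abs_of_nonneg hs]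
    calc Real.exp (-(p*s^2)) * (s * |msinc (s*b)|) / (2*p)
        ≤ Real.exp (-(p*s^2)) * (s * 1) / (2*p) := by
          gcongr
          exact abs_msinc_le _
      _ = 1/(2*p) * (s * Real.exp (-(p*s^2))) := by ring
  have hint := MeasureTheory.integral_Ioi_of_hasDerivAt_of_tendsto'
    (f := F) (f' := d) (a := 0) (fun x _ => hderiv x) hdint htend
  rw [hF0, sub_zero] at hint
  have hsplit : ∫ s in Ioi (0:ℝ), d s
      = (∫ s in Ioi (0:ℝ), s^2 * Real.exp (-(p*s^2)) * msinc (s*b))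
        - (1/(2*p)) * ∫ s in Ioi (0:ℝ), Real.exp (-(p*s^2)) * Real.cos (s*b) := by
    rw [hd]
    rw [integral_sub hd1 hd2]
    congr 1
    rw [← integral_const_mul]
    congr 1
    funext s
    ring
  rw [hint] at hsplit
  linarith

lemma tau_integral (p b : ℝ) (hp : 0 < p) :
    ∫ τ in Ioi (0:ℝ), Real.exp (-(p*τ)) * (Real.sqrt τ * msinc (Real.sqrt τ * b))
      = Real.sqrt (π/p) * Real.exp (-(b^2/(4*p))) / (2*p) := by
  have hsub := integral_comp_rpow_Ioi
    (fun τ : ℝ => Real.exp (-(p*τ)) * (Real.sqrt τ * msinc (Real.sqrt τ * b)))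
    (p := 2) two_ne_zero
  have heq : ∀ x ∈ Ioi (0:ℝ),
      (|(2:ℝ)| * x ^ ((2:ℝ) - 1)) • (Real.exp (-(p*(x ^ (2:ℝ)))) *
        (Real.sqrt (x ^ (2:ℝ)) * msinc (Real.sqrt (x ^ (2:ℝ)) * b)))
      = 2 * (x^2 * Real.exp (-(p*x^2)) * msinc (x*b)) := by
    intro x hx
    have hx0 : (0:ℝ) < x := hx
    have h2 : x ^ (2:ℝ) = x^2 := by
      rw [show (2:ℝ) = ((2:ℕ):ℝ) by norm_num, Real.rpow_natCast]
    rw [h2, Real.sqrt_sq hx0.le]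
    norm_num [smul_eq_mul, Real.rpow_one]
    ring
  rw [← hsub, setIntegral_congr_fun measurableSet_Ioi heq]
  rw [integral_const_mul, ibp_key p b hp, integral_cos_gaussian_Ioi p b hp]
  field_simp

lemma scalar_key (t : ℝ) (ht : 0 < t) (x : ℝ) (hx : 0 ≤ x) :
    Real.exp (-(t*x)) = (t ^ (-(3/2 : ℝ)) / (4 * Real.sqrt π)) *
      ∫ τ in Ioi (0:ℝ), Real.exp (-(τ/(4*t))) * (Real.sqrt τ * msinc (Real.sqrt τ * Real.sqrt x)) := by
  set p : ℝ := (4*t)⁻¹ with hp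
  have hp0 : 0 < p := by positivity
  have hexp : ∀ τ : ℝ, Real.exp (-(τ/(4*t))) = Real.exp (-(p*τ)) := by
    intro τ; rw [hp]; congr 1; rw [div_eq_mul_inv]; ring
  rw [show (∫ τ in Ioi (0:ℝ), Real.exp (-(τ/(4*t))) * (Real.sqrt τ * msinc (Real.sqrt τ * Real.sqrt x)))
      = ∫ τ in Ioi (0:ℝ), Real.exp (-(p*τ)) * (Real.sqrt τ * msinc (Real.sqrt τ * Real.sqrt x)) by
    exact setIntegral_congr_fun measurableSet_Ioi fun τ _ => by rw [hexp τ]]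
  rw [tau_integral p (Real.sqrt x) hp0]
  have h4p : 4*p = t⁻¹ := by rw [hp]; field_simp
  have hbb : Real.sqrt x ^ 2 = x := Real.sq_sqrt hx
  have he : Real.sqrt x ^ 2 / (4*p) = t * x := by rw [hbb, h4p]; field_simp
  have hpi : π / p = 4*t*π := by rw [hp]; field_simp
  rw [he, hpi]
  have hsq : Real.sqrt (4*t*π) = 2 * Real.sqrt t * Real.sqrt π := by
    rw [show (4:ℝ)*t*π = (2*Real.sqrt t)^2 * π by
      rw [mul_pow, Real.sq_sqrt ht.le]; ring]
    rw [Real.sqrt_mul (by positivity), Real.sqrt_sq (by positivity)]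
  have h2p : (2*p) = (2*t)⁻¹ := by rw [hp]; field_simp; ring
  have hone : t ^ (-3/2:ℝ) * Real.sqrt t * t = 1 := by
    have h1 : t ^ (-3/2:ℝ) * Real.sqrt t = t⁻¹ := by
      rw [Real.sqrt_eq_rpow, ← Real.rpow_add ht]
      norm_num
      exact Real.rpow_neg_one t
    rw [h1, inv_mul_cancel₀ ht.ne']
  rw [hsq, h2p, show t ^ (-(3/2:ℝ)) = t ^ (-3/2:ℝ) by norm_num]
  have hπ : Real.sqrt π ≠ 0 := by positivity
  have hone' : t ^ (-(3/2):ℝ) * Real.sqrt t * t = 1 := by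
    rw [show (-(3/2):ℝ) = -3/2 by norm_num]; exact hone
  field_simp
  linear_combination (-4) * hone'

noncomputable def waveKernel {H : Type*} [NormedAddCommGroup H] [InnerProductSpace ℂ H]
    [CompleteSpace H] (τ : ℝ) (A : H →L[ℂ] H) : H →L[ℂ] H :=
  cfc (fun x : ℝ => if x = 0 then τ else Real.sin (τ * Real.sqrt x) / Real.sqrt x) A

noncomputable def heatOp {H : Type*} [NormedAddCommGroup H] [InnerProductSpace ℂ H]
    [CompleteSpace H] (t : ℝ) (A : H →L[ℂ] H) : H →L[ℂ] H :=
  cfc (fun x : ℝ => Real.exp (-(t * x))) A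

theorem operator_transmutation
    {H : Type*} [NormedAddCommGroup H] [InnerProductSpace ℂ H] [CompleteSpace H]
    (A : H →L[ℂ] H) (hA : A.IsPositive)
    (t : ℝ) (ht : 0 < t) (f : H) :
    heatOp t A f =
      (t ^ (-(3 / 2 : ℝ)) / (4 * Real.sqrt Real.pi)) •
        ∫ τ in Ioi (0 : ℝ),
          Real.exp (-(τ / (4 * t))) • (waveKernel (Real.sqrt τ) A) f := by
  have hsa : IsSelfAdjoint A := hA.isSelfAdjoint
  have hsp : ∀ x ∈ spectrum ℝ A, 0 ≤ x := by
    have h := hA.spectrumRestricts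
    rw [SpectrumRestricts.nnreal_iff] at h
    exact h
  set μ : Measure ℝ := volume.restrict (Ioi 0) with hμ
  set c : ℝ := t ^ (-(3/2:ℝ)) / (4 * Real.sqrt π) with hc
  set F : ℝ → ℝ → ℝ := fun τ x =>
    Real.exp (-(τ/(4*t))) * (Real.sqrt τ * msinc (Real.sqrt τ * Real.sqrt x)) with hFdef
  have hFc : ∀ τ, Continuous (F τ) := fun τ =>
    continuous_const.mul (continuous_const.mul
      (continuous_msinc.comp (continuous_const.mul Real.continuous_sqrt)))
  -- wave kernel rewrite
  have hwave : ∀ τ : ℝ, Real.exp (-(τ/(4*t))) • waveKernel (Real.sqrt τ) A = cfc (F τ) A := by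
    intro τ
    rw [waveKernel, cfc_congr (fun x hx => mul_msinc_eq (Real.sqrt τ) x (hsp x hx))]
    exact (cfc_smul (Real.exp (-(τ/(4*t)))) _ A
      ((continuous_const.mul (continuous_msinc.comp
        (continuous_const.mul Real.continuous_sqrt))).continuousOn)).symm
  -- bound
  set bound : ℝ → ℝ := fun τ => Real.exp (-(τ/(4*t))) * Real.sqrt τ with hbd
  have hbound : ∀ τ : ℝ, ∀ x ∈ spectrum ℝ A, ‖F τ x‖ ≤ ‖bound τ‖ := by
    intro τ x _
    rw [Real.norm_eq_abs, Real.norm_eq_abs, hFdef, hbd]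
    simp only [abs_mul]
    rw [abs_of_nonneg (Real.exp_pos _).le, abs_of_nonneg (Real.sqrt_nonneg τ)]
    calc Real.exp (-(τ/(4*t))) * (Real.sqrt τ * |msinc (Real.sqrt τ * Real.sqrt x)|)
        ≤ Real.exp (-(τ/(4*t))) * (Real.sqrt τ * 1) := by
          gcongr; exact abs_msinc_le _
      _ = Real.exp (-(τ/(4*t))) * Real.sqrt τ := by ring
  have hbound_int : Integrable bound μ := by
    rw [hμ]
    set p : ℝ := (4*t)⁻¹ with hp
    have hp0 : 0 < p := by positivity
    have hg : IntegrableOn (fun y : ℝ => Real.exp (-y) * y ^ ((3:ℝ)/2 - 1)) (Ioi 0) :=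
      Real.GammaIntegral_convergent (by norm_num)
    have hcomp : IntegrableOn (fun τ : ℝ => Real.exp (-(p*τ)) * (p*τ) ^ ((3:ℝ)/2 - 1)) (Ioi 0) := by
      have := (integrableOn_Ioi_comp_mul_left_iff
        (fun y : ℝ => Real.exp (-y) * y ^ ((3:ℝ)/2 - 1)) 0 hp0).mpr (by simpa using hg)
      simpa using this
    have : IntegrableOn (fun τ : ℝ => p ^ (-(1:ℝ)/2) *
        (Real.exp (-(p*τ)) * (p*τ) ^ ((3:ℝ)/2 - 1))) (Ioi 0) := hcomp.const_mul _
    refine this.congr_fun (fun τ hτ => ?_) measurableSet_Ioi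
    have hτ0 : (0:ℝ) < τ := hτ
    rw [hbd]
    rw [show (3:ℝ)/2 - 1 = 1/2 by norm_num]
    beta_reduce
    rw [Real.mul_rpow hp0.le hτ0.le]
    rw [show -(p*τ) = -(τ/(4*t)) by rw [hp]; field_simp]
    rw [show ((-1:ℝ))/2 = -(1/2) by norm_num, Real.rpow_neg hp0.le]
    simp only [← Real.sqrt_eq_rpow]
    have hps : Real.sqrt p ≠ 0 := by positivity
    field_simp
  -- the continuous-map family
  have huncurry : Continuous (Function.uncurry
      (fun τ : ℝ => (spectrum ℝ A).restrict (F τ))) := by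
    have : Continuous (fun q : ℝ × (spectrum ℝ A) => F q.1 (q.2 : ℝ)) := by
      rw [hFdef]
      exact (((continuous_fst.div_const (4*t)).neg).rexp).mul
        ((Real.continuous_sqrt.comp continuous_fst).mul (continuous_msinc.comp
          ((Real.continuous_sqrt.comp continuous_fst).mul
            (Real.continuous_sqrt.comp (continuous_subtype_val.comp continuous_snd)))))
    exact this
  set fc : ℝ → C(spectrum ℝ A, ℝ) := fun τ =>
    ⟨(spectrum ℝ A).restrict (F τ), (huncurry.uncurry_left τ)⟩ with hfc
  have hfc_cont : Continuous fc := (ContinuousMap.curry ⟨_, huncurry⟩).continuous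
  have hfc_int : Integrable fc μ := by
    refine ⟨hfc_cont.aestronglyMeasurable, ?_⟩
    refine hbound_int.hasFiniteIntegral.mono (Filter.Eventually.of_forall fun τ => ?_)
    rw [ContinuousMap.norm_le _ (norm_nonneg (bound τ))]
    exact fun z => hbound τ z.1 z.2
  -- key : cfc of integral = integral of cfc
  have key : cfc (fun r : ℝ => ∫ τ, F τ r ∂μ) A = ∫ τ, cfc (F τ) A ∂μ :=
    cfc_integral F bound A
      (Continuous.continuousOn (by
        rw [hFdef]
        exact ((continuous_fst.div_const (4*t)).neg.rexp).mul
          ((Real.continuous_sqrt.comp continuous_fst).mul (continuous_msinc.comp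
            ((Real.continuous_sqrt.comp continuous_fst).mul
              (Real.continuous_sqrt.comp continuous_snd))))))
      (Filter.Eventually.of_forall fun τ z hz =>
        (hbound τ z hz).trans (le_of_eq (Real.norm_of_nonneg (by positivity))))
      hbound_int.hasFiniteIntegral hsa
  -- integrability of the operator-valued integrand
  have hop_int : Integrable (fun τ => cfc (F τ) A) μ := by
    have h1 := ContinuousLinearMap.integrable_comp (cfcL (a := A) hsa) hfc_int
    refine h1.congr (Filter.Eventually.of_forall fun τ => ?_)
    show cfcL (a := A) hsa (fc τ) = cfc (F τ) A
    rw [cfc_apply (F τ) A hsa ((hFc τ).continuousOn), cfcL_apply]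
    rfl
  -- continuity of the integral function on the spectrum
  have hg_cont : ContinuousOn (fun r : ℝ => ∫ τ, F τ r ∂μ) (spectrum ℝ A) := by
    rw [continuousOn_iff_continuous_restrict]
    have : (spectrum ℝ A).domRestrict (fun r : ℝ => ∫ τ, F τ r ∂μ) = ⇑(∫ τ, fc τ ∂μ) := by
      funext z
      rw [ContinuousMap.integral_apply hfc_int]
      rfl
    rw [this]
    exact (∫ τ, fc τ ∂μ).continuous
  -- assemble
  have hheat : heatOp t A = c • ∫ τ, cfc (F τ) A ∂μ := by
    rw [heatOp]
    have hscal : Set.EqOn (fun x : ℝ => Real.exp (-(t*x)))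
        (fun x : ℝ => c * ∫ τ, F τ x ∂μ) (spectrum ℝ A) := fun x hx =>
      scalar_key t ht x (hsp x hx)
    rw [cfc_congr hscal, cfc_const_mul c _ A hg_cont, key]
  rw [hheat]
  rw [ContinuousLinearMap.smul_apply, ContinuousLinearMap.integral_apply hop_int f]
  congr 1
  refine setIntegral_congr_fun measurableSet_Ioi fun τ _ => ?_
  rw [← hwave τ]
  rfl
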